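/- Let 𝒜 ∈ ℝ^{n₁×n₂×n₃} be nonzero, and let (x₁⁰, x₂⁰, x₃⁰) be generated by Algorithm A: x₃⁰ is the normalized truncation (to r₃ largest-magnitude entries) of the mode-3 fiber 𝒜(ī₁, ī₂, :) of largest truncated norm; x₂⁰ is the normalized r₂-truncation of 𝒜(e₁^{ī₁}, ·, x₃⁰); x₁⁰ is the normalized r₁-truncation of 𝒜(·, x₂⁰, x₃⁰). Then 𝒜(x₁⁰, x₂⁰, x₃⁰) ≥ v_opt / √(r₁ r₂), where v_opt is the maximum of 𝒜(x₁, x₂, x₃) over unit vectors x_j with ‖x_j‖₀ ≤ r_j. -/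

import Mathlib

open Finset

noncomputable def enorm' {ι : Type*} [Fintype ι] (x : ι → ℝ) : ℝ :=
  Real.sqrt (∑ i, x i ^ 2)

def dot {ι : Type*} [Fintype ι] (x y : ι → ℝ) : ℝ := ∑ i, x i * y i

noncomputable def l0 {ι : Type*} [Fintype ι] (x : ι → ℝ) : ℕ :=
  (Finset.univ.filter fun i => x i ≠ 0).card

def IsTrunc {ι : Type*} [Fintype ι] [DecidableEq ι] (a : ι → ℝ) (r : ℕ) (ar : ι → ℝ) : Prop :=
  ∃ S : Finset ι, S.card = r ∧ (∀ i ∈ S, ar i = a i) ∧ (∀ i ∉ S, ar i = 0) ∧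
    ∀ i ∈ S, ∀ j ∉ S, |a j| ≤ |a i|

noncomputable def lmax {m n' : Type*} [Fintype m] [Fintype n'] (A : Matrix m n' ℝ) : ℝ :=
  sSup {c | ∃ x : n' → ℝ, enorm' x = 1 ∧ c = enorm' (A.mulVec x)}

noncomputable def fnorm {m n' : Type*} [Fintype m] [Fintype n'] (A : Matrix m n' ℝ) : ℝ :=
  Real.sqrt (∑ i, ∑ j, A i j ^ 2)

def tri {n1 n2 n3 : ℕ} (A : Fin n1 → Fin n2 → Fin n3 → ℝ)
    (x : Fin n1 → ℝ) (y : Fin n2 → ℝ) (z : Fin n3 → ℝ) : ℝ :=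
  ∑ i, ∑ j, ∑ k, A i j k * x i * y j * z k

def mlin {d : ℕ} {n : Fin d → ℕ} (A : (∀ j, Fin (n j)) → ℝ)
    (x : ∀ j, Fin (n j) → ℝ) : ℝ :=
  ∑ i, A i * ∏ j, x j (i j)

lemma enorm_nonneg {ι : Type*} [Fintype ι] (x : ι → ℝ) : 0 ≤ enorm' x := Real.sqrt_nonneg _

lemma enorm_sq {ι : Type*} [Fintype ι] (x : ι → ℝ) : enorm' x ^ 2 = ∑ i, x i ^ 2 :=
  Real.sq_sqrt (Finset.sum_nonneg fun i _ => sq_nonneg _)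

lemma trunc_dot {ι : Type*} [Fintype ι] [DecidableEq ι] {a ar : ι → ℝ} {r : ℕ}
    (h : IsTrunc a r ar) : ∑ i, a i * ar i = enorm' ar ^ 2 := by
  obtain ⟨S, hcard, hon, hoff, hdom⟩ := h
  rw [enorm_sq]
  refine Finset.sum_congr rfl fun i _ => ?_
  by_cases hi : i ∈ S
  · rw [hon i hi]; ring
  · rw [hoff i hi]; ring

lemma trunc_normalized_dot {ι : Type*} [Fintype ι] [DecidableEq ι] {a ar : ι → ℝ} {r : ℕ}
    (h : IsTrunc a r ar) (hpos : 0 < enorm' ar) :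
    ∑ i, a i * (ar i / enorm' ar) = enorm' ar := by
  have : ∑ i, a i * (ar i / enorm' ar) = (∑ i, a i * ar i) / enorm' ar := by
    rw [Finset.sum_div]; exact Finset.sum_congr rfl fun i _ => (mul_div_assoc _ _ _).symm
  rw [this, trunc_dot h, sq, mul_div_assoc, div_self hpos.ne', mul_one]

lemma abs_le_enorm_trunc {ι : Type*} [Fintype ι] [DecidableEq ι] {a ar : ι → ℝ} {r : ℕ}
    (h : IsTrunc a r ar) (hr : 1 ≤ r) (i0 : ι) : |a i0| ≤ enorm' ar := by
  obtain ⟨S, hcard, hon, hoff, hdom⟩ := h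
  have key : ∀ i ∈ S, |a i| ≤ enorm' ar := by
    intro i hi
    have h1 : a i ^ 2 ≤ ∑ j, ar j ^ 2 := by
      rw [← hon i hi]
      exact Finset.single_le_sum (f := fun j => ar j ^ 2) (fun j _ => sq_nonneg _)
        (Finset.mem_univ i)
    have := Real.sqrt_le_sqrt h1
    rwa [Real.sqrt_sq_eq_abs] at this
  by_cases hi : i0 ∈ S
  · exact key i0 hi
  · have hS : S.Nonempty := Finset.card_pos.mp (by omega)
    obtain ⟨i, hi'⟩ := hS
    exact (hdom i hi' i0 hi).trans (key i hi')

lemma sum_sq_subset_le {ι : Type*} [DecidableEq ι] (S Q : Finset ι) (hQ : Q.card ≤ S.card)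
    (a : ι → ℝ) (hdom : ∀ i ∈ S, ∀ j ∉ S, |a j| ≤ |a i|) :
    ∑ i ∈ Q, a i ^ 2 ≤ ∑ i ∈ S, a i ^ 2 := by
  have hQsplit : ∑ i ∈ Q \ S, a i ^ 2 + ∑ i ∈ Q ∩ S, a i ^ 2 = ∑ i ∈ Q, a i ^ 2 := by
    have := Finset.sum_sdiff (f := fun i => a i ^ 2) (Finset.inter_subset_left (s₁ := Q) (s₂ := S))
    rwa [Finset.sdiff_inter_self_left] at this
  have hSsplit : ∑ i ∈ S \ Q, a i ^ 2 + ∑ i ∈ S ∩ Q, a i ^ 2 = ∑ i ∈ S, a i ^ 2 := by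
    have := Finset.sum_sdiff (f := fun i => a i ^ 2) (Finset.inter_subset_left (s₁ := S) (s₂ := Q))
    rwa [Finset.sdiff_inter_self_left] at this
  have hinter : ∑ i ∈ Q ∩ S, a i ^ 2 = ∑ i ∈ S ∩ Q, a i ^ 2 := by rw [Finset.inter_comm]
  have hcard : (Q \ S).card ≤ (S \ Q).card := by
    have h1 := Finset.card_inter_add_card_sdiff Q S
    have h2 := Finset.card_inter_add_card_sdiff S Q
    have h3 : (Q ∩ S).card = (S ∩ Q).card := by rw [Finset.inter_comm]
    omega
  have key : ∑ i ∈ Q \ S, a i ^ 2 ≤ ∑ i ∈ S \ Q, a i ^ 2 := by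
    rcases Finset.eq_empty_or_nonempty (Q \ S) with he | hne
    · rw [he, Finset.sum_empty]
      exact Finset.sum_nonneg fun i _ => sq_nonneg _
    · have hSQ : (S \ Q).Nonempty := Finset.card_pos.mp
        (lt_of_lt_of_le (Finset.card_pos.mpr hne) hcard)
      obtain ⟨i0, hi0, hmin⟩ := Finset.exists_min_image (S \ Q) (fun i => a i ^ 2) hSQ
      have hbound : ∀ j ∈ Q \ S, a j ^ 2 ≤ a i0 ^ 2 := by
        intro j hj
        have hjS : j ∉ S := (Finset.mem_sdiff.mp hj).2
        have hi0S : i0 ∈ S := (Finset.mem_sdiff.mp hi0).1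
        have := hdom i0 hi0S j hjS
        calc a j ^ 2 = |a j| ^ 2 := (sq_abs _).symm
          _ ≤ |a i0| ^ 2 := pow_le_pow_left₀ (abs_nonneg _) this 2
          _ = a i0 ^ 2 := sq_abs _
      calc ∑ i ∈ Q \ S, a i ^ 2 ≤ (Q \ S).card • (a i0 ^ 2) :=
            Finset.sum_le_card_nsmul _ _ _ hbound
        _ ≤ (S \ Q).card • (a i0 ^ 2) := by
            simp only [nsmul_eq_mul]
            exact mul_le_mul_of_nonneg_right (by exact_mod_cast hcard) (sq_nonneg _)
        _ ≤ ∑ i ∈ S \ Q, a i ^ 2 := Finset.card_nsmul_le_sum _ _ _ hmin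
  linarith
lemma sparse_dot_le {ι : Type*} [Fintype ι] [DecidableEq ι] {a ar y : ι → ℝ} {r : ℕ}
    (h : IsTrunc a r ar) (hy : enorm' y = 1) (hl : l0 y ≤ r) :
    |∑ k, a k * y k| ≤ enorm' ar := by
  obtain ⟨S, hcard, hon, hoff, hdom⟩ := h
  set Q := Finset.univ.filter fun i => y i ≠ 0 with hQdef
  have hsum : ∑ k, a k * y k = ∑ k ∈ Q, a k * y k := by
    rw [eq_comm]
    apply Finset.sum_subset (Finset.subset_univ _)
    intro k _ hk
    have : y k = 0 := by simpa [hQdef] using hk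
    simp [this]
  have hcs : (∑ k ∈ Q, a k * y k) ^ 2 ≤ (∑ k ∈ Q, a k ^ 2) * ∑ k ∈ Q, y k ^ 2 :=
    Finset.sum_mul_sq_le_sq_mul_sq _ _ _
  have h1 : ∑ k ∈ Q, a k ^ 2 ≤ ∑ k ∈ S, a k ^ 2 :=
    sum_sq_subset_le S Q (by rw [hcard]; exact hl) a hdom
  have h2 : ∑ k ∈ Q, y k ^ 2 ≤ 1 := by
    have hle : ∑ k ∈ Q, y k ^ 2 ≤ ∑ k, y k ^ 2 :=
      Finset.sum_le_sum_of_subset_of_nonneg (Finset.subset_univ _) fun i _ _ => sq_nonneg _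
    have he := enorm_sq y
    rw [hy] at he
    linarith [he]
  have h3 : enorm' ar ^ 2 = ∑ k ∈ S, a k ^ 2 := by
    rw [enorm_sq,
      ← Finset.sum_subset (Finset.subset_univ S) fun k _ hk => by rw [hoff k hk]; ring]
    exact Finset.sum_congr rfl fun k hk => by rw [hon k hk]
  have h4 : (∑ k ∈ Q, a k * y k) ^ 2 ≤ enorm' ar ^ 2 := by
    have hQa : (0:ℝ) ≤ ∑ k ∈ Q, a k ^ 2 := Finset.sum_nonneg fun i _ => sq_nonneg _
    have hQy : (0:ℝ) ≤ ∑ k ∈ Q, y k ^ 2 := Finset.sum_nonneg fun i _ => sq_nonneg _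
    nlinarith
  rw [hsum, ← Real.sqrt_sq_eq_abs]
  calc Real.sqrt ((∑ k ∈ Q, a k * y k) ^ 2) ≤ Real.sqrt (enorm' ar ^ 2) :=
        Real.sqrt_le_sqrt h4
    _ = enorm' ar := Real.sqrt_sq (enorm_nonneg ar)

lemma bounded_sparse_dot {ι : Type*} [Fintype ι] {y c : ι → ℝ} {r : ℕ} {C : ℝ}
    (hy : enorm' y = 1) (hl : l0 y ≤ r) (hC : 0 ≤ C) (hc : ∀ j, |c j| ≤ C) :
    |∑ j, c j * y j| ≤ Real.sqrt r * C := by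
  classical
  set Q := Finset.univ.filter fun i => y i ≠ 0 with hQdef
  have hsum : ∑ j, c j * y j = ∑ j ∈ Q, c j * y j := by
    rw [eq_comm]
    apply Finset.sum_subset (Finset.subset_univ _)
    intro k _ hk
    have : y k = 0 := by simpa [hQdef] using hk
    simp [this]
  have habs : |∑ j ∈ Q, c j * y j| ≤ ∑ j ∈ Q, |c j| * |y j| := by
    calc |∑ j ∈ Q, c j * y j| ≤ ∑ j ∈ Q, |c j * y j| := Finset.abs_sum_le_sum_abs _ _
      _ = ∑ j ∈ Q, |c j| * |y j| := Finset.sum_congr rfl fun j _ => abs_mul _ _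
  have h2 : ∑ j ∈ Q, |c j| * |y j| ≤ C * ∑ j ∈ Q, |y j| := by
    rw [Finset.mul_sum]
    exact Finset.sum_le_sum fun j _ => mul_le_mul_of_nonneg_right (hc j) (abs_nonneg _)
  have h3 : ∑ j ∈ Q, |y j| ≤ Real.sqrt r := by
    rw [Real.le_sqrt (Finset.sum_nonneg fun j _ => abs_nonneg _) (Nat.cast_nonneg r)]
    have hcs : (∑ j ∈ Q, |y j| * 1) ^ 2 ≤ (∑ j ∈ Q, |y j| ^ 2) * ∑ j ∈ Q, (1:ℝ) ^ 2 :=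
      Finset.sum_mul_sq_le_sq_mul_sq _ _ _
    have he1 : ∑ j ∈ Q, |y j| * 1 = ∑ j ∈ Q, |y j| := by simp
    have he2 : ∑ j ∈ Q, |y j| ^ 2 = ∑ j ∈ Q, y j ^ 2 :=
      Finset.sum_congr rfl fun j _ => sq_abs _
    have he3 : ∑ j ∈ Q, (1:ℝ) ^ 2 = (Q.card : ℝ) := by simp
    have hy2 : ∑ j ∈ Q, y j ^ 2 ≤ 1 := by
      have hle : ∑ k ∈ Q, y k ^ 2 ≤ ∑ k, y k ^ 2 :=
        Finset.sum_le_sum_of_subset_of_nonneg (Finset.subset_univ _) fun i _ _ => sq_nonneg _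
      have he := enorm_sq y
      rw [hy] at he
      linarith [he]
    have hcard : (Q.card : ℝ) ≤ (r : ℝ) := by exact_mod_cast hl
    have hQy : (0:ℝ) ≤ ∑ j ∈ Q, y j ^ 2 := Finset.sum_nonneg fun i _ => sq_nonneg _
    have hQc : (0:ℝ) ≤ (Q.card : ℝ) := Nat.cast_nonneg _
    rw [he1, he2, he3] at hcs
    nlinarith [hcs, hy2, hcard, hQy, hQc]
  have hfin : C * ∑ j ∈ Q, |y j| ≤ Real.sqrt r * C := by
    rw [mul_comm]
    exact mul_le_mul_of_nonneg_right h3 hC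
  rw [hsum]
  linarith

/-- Theorem 3.1: approximation bound of Algorithm A for d = 3:
𝒜(x₁⁰,x₂⁰,x₃⁰) ≥ v_opt/√(r₁r₂). -/
theorem stmt_8 {n1 n2 n3 : ℕ} (A : Fin n1 → Fin n2 → Fin n3 → ℝ) (hA : A ≠ 0)
    (r1 r2 r3 : ℕ) (hr1 : 1 ≤ r1 ∧ r1 ≤ n1) (hr2 : 1 ≤ r2 ∧ r2 ≤ n2)
    (hr3 : 1 ≤ r3 ∧ r3 ≤ n3)
    -- step 1: truncations of all mode-3 fibers
    (T : Fin n1 → Fin n2 → Fin n3 → ℝ)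
    (hT : ∀ i1 i2, IsTrunc (fun k => A i1 i2 k) r3 (T i1 i2))
    -- step 2: select the fiber with largest truncated norm
    (i1b : Fin n1) (i2b : Fin n2)
    (hsel : ∀ i1 i2, enorm' (T i1 i2) ≤ enorm' (T i1b i2b))
    (x3 : Fin n3 → ℝ) (hx3 : x3 = fun k => T i1b i2b k / enorm' (T i1b i2b))
    -- step 3: sequential truncated updates
    (t2 : Fin n2 → ℝ) (ht2 : IsTrunc (fun j => ∑ k, A i1b j k * x3 k) r2 t2)
    (x2 : Fin n2 → ℝ) (hx2 : x2 = fun j => t2 j / enorm' t2)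
    (t1 : Fin n1 → ℝ) (ht1 : IsTrunc (fun i => ∑ j, ∑ k, A i j k * x2 j * x3 k) r1 t1)
    (x1 : Fin n1 → ℝ) (hx1 : x1 = fun i => t1 i / enorm' t1) :
    ∀ y1 y2 y3, enorm' y1 = 1 → l0 y1 ≤ r1 → enorm' y2 = 1 → l0 y2 ≤ r2 →
      enorm' y3 = 1 → l0 y3 ≤ r3 →
      tri A y1 y2 y3 ≤ Real.sqrt ((r1 : ℝ) * r2) * tri A x1 x2 x3 := by
  intro y1 y2 y3 hy1 hl1 hy2 hl2 hy3 hl3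
  obtain ⟨hr1a, _⟩ := hr1
  obtain ⟨hr2a, _⟩ := hr2
  obtain ⟨hr3a, _⟩ := hr3
  set M := enorm' (T i1b i2b) with hMdef
  -- positivity of M
  have hApos : ∃ i j k, A i j k ≠ 0 := by
    by_contra h
    push_neg at h
    apply hA
    funext i j k
    simpa using h i j k
  obtain ⟨i0, j0, k0, hijk⟩ := hApos
  have hMpos : 0 < M := by
    have h1 : |A i0 j0 k0| ≤ enorm' (T i0 j0) := abs_le_enorm_trunc (hT i0 j0) hr3a k0
    have h2 := hsel i0 j0
    have h3 := abs_pos.mpr hijk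
    calc (0:ℝ) < |A i0 j0 k0| := h3
      _ ≤ enorm' (T i0 j0) := h1
      _ ≤ M := h2
  -- chain of lower bounds
  have ha2 : (∑ k, A i1b i2b k * x3 k) = M := by
    rw [hx3]
    exact trunc_normalized_dot (hT i1b i2b) hMpos
  have hMN2 : M ≤ enorm' t2 := by
    have h1 : |∑ k, A i1b i2b k * x3 k| ≤ enorm' t2 := abs_le_enorm_trunc ht2 hr2a i2b
    rw [ha2, abs_of_pos hMpos] at h1
    exact h1
  have hN2pos : 0 < enorm' t2 := lt_of_lt_of_le hMpos hMN2
  have ha1 : (∑ j, ∑ k, A i1b j k * x2 j * x3 k) = enorm' t2 := by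
    have step : ∀ j, (∑ k, A i1b j k * x2 j * x3 k) = (∑ k, A i1b j k * x3 k) * x2 j := by
      intro j
      rw [Finset.sum_mul]
      exact Finset.sum_congr rfl fun k _ => by ring
    calc ∑ j, ∑ k, A i1b j k * x2 j * x3 k
        = ∑ j, (∑ k, A i1b j k * x3 k) * x2 j := Finset.sum_congr rfl fun j _ => step j
      _ = enorm' t2 := by rw [hx2]; exact trunc_normalized_dot ht2 hN2pos
  have hN2N1 : enorm' t2 ≤ enorm' t1 := by
    have h1 : |∑ j, ∑ k, A i1b j k * x2 j * x3 k| ≤ enorm' t1 := abs_le_enorm_trunc ht1 hr1a i1b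
    rw [ha1, abs_of_pos hN2pos] at h1
    exact h1
  have hN1pos : 0 < enorm' t1 := lt_of_lt_of_le hN2pos hN2N1
  have htri : tri A x1 x2 x3 = enorm' t1 := by
    have step : ∀ i, (∑ j, ∑ k, A i j k * x1 i * x2 j * x3 k)
        = (∑ j, ∑ k, A i j k * x2 j * x3 k) * x1 i := by
      intro i
      rw [Finset.sum_mul]
      refine Finset.sum_congr rfl fun j _ => ?_
      rw [Finset.sum_mul]
      exact Finset.sum_congr rfl fun k _ => by ring
    calc tri A x1 x2 x3
        = ∑ i, (∑ j, ∑ k, A i j k * x2 j * x3 k) * x1 i :=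
          Finset.sum_congr rfl fun i _ => step i
      _ = enorm' t1 := by rw [hx1]; exact trunc_normalized_dot ht1 hN1pos
  -- upper bound on tri A y1 y2 y3
  have hc : ∀ i j, |∑ k, A i j k * y3 k| ≤ M := by
    intro i j
    have h1 : |∑ k, A i j k * y3 k| ≤ enorm' (T i j) := sparse_dot_le (hT i j) hy3 hl3
    exact h1.trans (hsel i j)
  have hbi : ∀ i, |∑ j, ∑ k, A i j k * y2 j * y3 k| ≤ Real.sqrt r2 * M := by
    intro i
    have heq : ∑ j, ∑ k, A i j k * y2 j * y3 k = ∑ j, (∑ k, A i j k * y3 k) * y2 j := by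
      refine Finset.sum_congr rfl fun j _ => ?_
      rw [Finset.sum_mul]
      exact Finset.sum_congr rfl fun k _ => by ring
    rw [heq]
    exact bounded_sparse_dot hy2 hl2 hMpos.le (hc i)
  have htop : |tri A y1 y2 y3| ≤ Real.sqrt r1 * (Real.sqrt r2 * M) := by
    have heq : tri A y1 y2 y3 = ∑ i, (∑ j, ∑ k, A i j k * y2 j * y3 k) * y1 i := by
      refine Finset.sum_congr rfl fun i _ => ?_
      rw [Finset.sum_mul]
      refine Finset.sum_congr rfl fun j _ => ?_
      rw [Finset.sum_mul]
      exact Finset.sum_congr rfl fun k _ => by ring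
    rw [heq]
    exact bounded_sparse_dot hy1 hl1 (by positivity) hbi
  have hsqrt : Real.sqrt r1 * Real.sqrt r2 = Real.sqrt ((r1:ℝ) * r2) :=
    (Real.sqrt_mul (Nat.cast_nonneg r1) _).symm
  calc tri A y1 y2 y3 ≤ |tri A y1 y2 y3| := le_abs_self _
    _ ≤ Real.sqrt r1 * (Real.sqrt r2 * M) := htop
    _ = Real.sqrt ((r1:ℝ) * r2) * M := by rw [← mul_assoc, hsqrt]
    _ ≤ Real.sqrt ((r1:ℝ) * r2) * tri A x1 x2 x3 := by
        rw [htri]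
        exact mul_le_mul_of_nonneg_left (hMN2.trans hN2N1) (Real.sqrt_nonneg _)
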